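/- Let 0 < β < 1 and let Ω ⊂ ℝ be a compact set of positive finite Lebesgue measure such that there are c₁, c₂ > 0 and δ > 0 with c₁|t|^β ≤ (ω₂[χ_Ω](t))² ≤ c₂|t|^β for all 0 < |t| ≤ δ. Then the d-fold product Ω^d ⊂ ℝ^d satisfies: there are C₁, C₂ > 0 and δ' > 0 with C₁|h|^β ≤ (ω₂[χ_{Ω^d}](h))² ≤ C₂|h|^β for all h ∈ ℝ^d with 0 < |h| ≤ δ'. -/

import Mathlib

open MeasureTheory
open scoped ENNReal
open scoped symmDiff

noncomputable section

/-- Euclidean space `ℝ^d`. -/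
abbrev Ed (d : ℕ) := EuclideanSpace ℝ (Fin d)

/-- The `L²(ℝ)` modulus of continuity of `g : ℝ → ℂ`. -/
def omega2R (g : ℝ → ℂ) (t : ℝ) : ℝ≥0∞ :=
  eLpNorm (fun x => g (x + t) - g x) 2 volume

/-- The `L²(ℝ^d)` modulus of continuity. -/
def omega2 {d : ℕ} (g : Ed d → ℂ) (h : Ed d) : ℝ≥0∞ :=
  eLpNorm (fun x => g (x + h) - g x) 2 volume

lemma sq_eLpNorm_ind {α : Type*} [MeasurableSpace α] (μ : Measure α)
    (S : Set α) (hS : MeasurableSet S) (f : α → α) (hf : Measurable f) :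
    (eLpNorm (fun x => S.indicator (fun _ => (1:ℂ)) (f x) - S.indicator (fun _ => (1:ℂ)) x) 2 μ) ^ 2
      = μ ((f ⁻¹' S) ∆ S) := by
  rw [eLpNorm_eq_lintegral_rpow_enorm_toReal (by norm_num) (by norm_num)]
  simp_rw [enorm_eq_nnnorm]
  have hpt : (fun x => (‖S.indicator (fun _ => (1:ℂ)) (f x) - S.indicator (fun _ => (1:ℂ)) x‖₊ : ℝ≥0∞) ^ (2:ℝ≥0∞).toReal)
      = Set.indicator ((f ⁻¹' S) ∆ S) (fun _ => (1:ℝ≥0∞)) := by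
    funext x
    have hmem : x ∈ (f ⁻¹' S) ∆ S ↔ (f x ∈ S ∧ x ∉ S) ∨ (x ∈ S ∧ f x ∉ S) := by
      rw [Set.mem_symmDiff]; exact Iff.rfl
    by_cases h1 : f x ∈ S <;> by_cases h2 : x ∈ S
    · rw [Set.indicator_of_mem h1, Set.indicator_of_mem h2,
        Set.indicator_of_notMem (by simp [hmem, h1, h2])]
      simp
    · rw [Set.indicator_of_mem h1, Set.indicator_of_notMem h2,
        Set.indicator_of_mem (by simp [hmem, h1, h2])]
      simp
    · rw [Set.indicator_of_notMem h1, Set.indicator_of_mem h2,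
        Set.indicator_of_mem (by simp [hmem, h1, h2])]
      simp
    · rw [Set.indicator_of_notMem h1, Set.indicator_of_notMem h2,
        Set.indicator_of_notMem (by simp [hmem, h1, h2])]
      simp
  rw [hpt, lintegral_indicator ((hf hS).symmDiff hS), setLIntegral_one,
    ← ENNReal.rpow_natCast _ 2, ← ENNReal.rpow_mul]
  norm_num

lemma vol_pi_set (d : ℕ) (A : Fin d → Set ℝ) (hA : ∀ i, MeasurableSet (A i)) :
    volume {x : Ed d | ∀ i, x i ∈ A i} = ∏ i, volume (A i) := by
  have hmp := PiLp.volume_preserving_ofLp (Fin d)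
  have hset : {x : Ed d | ∀ i, x i ∈ A i}
      = (@WithLp.ofLp 2 (Fin d → ℝ)) ⁻¹' (Set.pi Set.univ A) := by
    ext x; simp [Set.mem_pi]
  rw [hset, hmp.measure_preimage ((MeasurableSet.univ_pi hA).nullMeasurableSet),
    volume_pi_pi]

lemma Ed_abs_coord_le_norm {d : ℕ} (h : Ed d) (i : Fin d) : |h i| ≤ ‖h‖ := by
  rw [EuclideanSpace.norm_eq]
  calc |h i| = Real.sqrt (‖h i‖ ^ 2) := by
        rw [Real.sqrt_sq_eq_abs, abs_norm, Real.norm_eq_abs]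
    _ ≤ Real.sqrt (∑ j, ‖h j‖ ^ 2) := Real.sqrt_le_sqrt
        (Finset.single_le_sum (fun j _ => sq_nonneg ‖h j‖) (Finset.mem_univ i))

lemma Ed_exists_norm_le {d : ℕ} (hd : 0 < d) (h : Ed d) :
    ∃ i, ‖h‖ ≤ Real.sqrt d * |h i| := by
  have hne : (Finset.univ : Finset (Fin d)).Nonempty :=
    @Finset.univ_nonempty _ _ (Fin.pos_iff_nonempty.mp hd)
  obtain ⟨i, -, hi⟩ := Finset.exists_max_image Finset.univ (fun j => |h j|) hne
  refine ⟨i, ?_⟩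
  rw [EuclideanSpace.norm_eq]
  have hsum : ∑ j, ‖h j‖ ^ 2 ≤ (d : ℝ) * |h i| ^ 2 := by
    calc ∑ j, ‖h j‖ ^ 2 ≤ ∑ _j : Fin d, |h i| ^ 2 :=
          Finset.sum_le_sum fun j _ => by
            rw [Real.norm_eq_abs]
            exact pow_le_pow_left₀ (abs_nonneg _) (hi j (Finset.mem_univ j)) 2
      _ = (d : ℝ) * |h i| ^ 2 := by
          rw [Finset.sum_const, Finset.card_univ, Fintype.card_fin, nsmul_eq_mul]
  calc Real.sqrt (∑ j, ‖h j‖ ^ 2) ≤ Real.sqrt ((d : ℝ) * |h i| ^ 2) :=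
        Real.sqrt_le_sqrt hsum
    _ = Real.sqrt d * |h i| := by
        rw [Real.sqrt_mul (Nat.cast_nonneg d), Real.sqrt_sq_eq_abs, abs_abs]

theorem statement19 (d : ℕ) (hd : 0 < d) (β : ℝ) (hβ : 0 < β ∧ β < 1)
    (Ω : Set ℝ) (hΩcomp : IsCompact Ω) (hΩpos : 0 < volume Ω) (hΩfin : volume Ω < ⊤)
    (c₁ c₂ δ : ℝ) (hc₁ : 0 < c₁) (hc₂ : 0 < c₂) (hδ : 0 < δ)
    (hΩreg : ∀ t : ℝ, 0 < |t| → |t| ≤ δ →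
      ENNReal.ofReal (c₁ * |t| ^ β) ≤ (omega2R (Set.indicator Ω fun _ => (1 : ℂ)) t) ^ 2 ∧
      (omega2R (Set.indicator Ω fun _ => (1 : ℂ)) t) ^ 2 ≤ ENNReal.ofReal (c₂ * |t| ^ β)) :
    ∃ C₁ C₂ δ' : ℝ, 0 < C₁ ∧ 0 < C₂ ∧ 0 < δ' ∧
      ∀ h : Ed d, 0 < ‖h‖ → ‖h‖ ≤ δ' →
        ENNReal.ofReal (C₁ * ‖h‖ ^ β) ≤
          (omega2 (Set.indicator {x : Ed d | ∀ i, x i ∈ Ω} fun _ => (1 : ℂ)) h) ^ 2 ∧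
        (omega2 (Set.indicator {x : Ed d | ∀ i, x i ∈ Ω} fun _ => (1 : ℂ)) h) ^ 2 ≤
          ENNReal.ofReal (C₂ * ‖h‖ ^ β) := by
  obtain ⟨hβ0, hβ1⟩ := hβ
  have hΩm : MeasurableSet Ω := hΩcomp.measurableSet
  set m : ℝ≥0∞ := volume Ω with hm
  have hmne : m ≠ ⊤ := hΩfin.ne
  set mr : ℝ := m.toReal with hmrdef
  have hmrpos : 0 < mr := ENNReal.toReal_pos hΩpos.ne' hmne
  have hhalfne : m / 2 ≠ ⊤ := by
    simp only [ne_eq, ENNReal.div_eq_top]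
    push_neg
    exact ⟨fun _ => by norm_num, fun h => absurd h hmne⟩
  have hhalf : ENNReal.ofReal (mr / 2) = m / 2 := by
    rw [ENNReal.ofReal_div_of_pos two_pos, ENNReal.ofReal_toReal hmne]
    norm_num
  have hdpos : (0:ℝ) < d := Nat.cast_pos.mpr hd
  -- one-dimensional translated symmetric differences
  set D : ℝ → Set ℝ := fun t => ((fun s => s + t) ⁻¹' Ω) ∆ Ω with hD
  have hDm : ∀ t, MeasurableSet (D t) :=
    fun t => (((measurable_add_const t) hΩm).symmDiff hΩm)
  have hω : ∀ t : ℝ, (omega2R (Set.indicator Ω fun _ => (1:ℂ)) t) ^ 2 = volume (D t) :=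
    fun t => sq_eLpNorm_ind volume Ω hΩm (fun s => s + t) (measurable_add_const t)
  set δ' : ℝ := min δ ((mr / (2 * c₂)) ^ (1/β)) with hδ'def
  have hδ'pos : 0 < δ' := lt_min hδ (Real.rpow_pos_of_pos (by positivity) _)
  have hδ'δ : δ' ≤ δ := min_le_left _ _
  have hFA : ∀ t : ℝ, |t| ≤ δ' → volume (D t) ≤ ENNReal.ofReal (c₂ * |t| ^ β) := by
    intro t ht
    rcases eq_or_ne t 0 with rfl | htne
    · have h0 : (fun s : ℝ => s + 0) ⁻¹' Ω = Ω := by simp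
      have : D 0 = ∅ := by rw [hD]; simp only [h0, symmDiff_self, Set.bot_eq_empty]
      simp [this]
    · have h1 : 0 < |t| := abs_pos.mpr htne
      have h2 := (hΩreg t h1 (ht.trans hδ'δ)).2
      rwa [hω] at h2
  have hrb : ∀ t : ℝ, |t| ≤ δ' → c₂ * |t| ^ β ≤ mr / 2 := by
    intro t ht
    have h0 : (0:ℝ) ≤ |t| := abs_nonneg t
    have h2 : |t| ^ β ≤ ((mr / (2 * c₂)) ^ (1/β)) ^ β :=
      Real.rpow_le_rpow h0 (ht.trans (min_le_right _ _)) hβ0.le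
    have h3 : ((mr / (2 * c₂)) ^ (1/β)) ^ β = mr / (2 * c₂) := by
      rw [← Real.rpow_mul (by positivity), one_div, inv_mul_cancel₀ hβ0.ne', Real.rpow_one]
    calc c₂ * |t| ^ β ≤ c₂ * (mr / (2 * c₂)) :=
          mul_le_mul_of_nonneg_left (h2.trans h3.le) hc₂.le
      _ = mr / 2 := by field_simp
  have hFA' : ∀ t : ℝ, |t| ≤ δ' → volume (D t) ≤ m / 2 := fun t ht =>
    (hFA t ht).trans (by rw [← hhalf]; exact ENNReal.ofReal_le_ofReal (hrb t ht))
  have hFB : ∀ t : ℝ, |t| ≤ δ' → m / 2 ≤ volume (Ω ∩ ((fun s => s + t) ⁻¹' Ω)) := by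
    intro t ht
    have hXm : MeasurableSet ((fun s : ℝ => s + t) ⁻¹' Ω) := (measurable_add_const t) hΩm
    have key : volume (Ω ∩ ((fun s : ℝ => s + t) ⁻¹' Ω))
        + volume (Ω \ ((fun s : ℝ => s + t) ⁻¹' Ω)) = m := measure_inter_add_diff Ω hXm
    have hsub : Ω \ ((fun s : ℝ => s + t) ⁻¹' Ω) ⊆ D t := by
      intro x hx
      rw [hD]
      exact Set.mem_symmDiff.mpr (Or.inr ⟨hx.1, hx.2⟩)
    have h4 : volume (Ω \ ((fun s : ℝ => s + t) ⁻¹' Ω)) ≤ m / 2 :=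
      (measure_mono hsub).trans (hFA' t ht)
    have h5 : m / 2 + m / 2 ≤ volume (Ω ∩ ((fun s : ℝ => s + t) ⁻¹' Ω)) + m / 2 := by
      rw [ENNReal.add_halves]
      calc m = volume (Ω ∩ ((fun s : ℝ => s + t) ⁻¹' Ω))
            + volume (Ω \ ((fun s : ℝ => s + t) ⁻¹' Ω)) := key.symm
        _ ≤ _ := add_le_add_right h4 _
    exact (ENNReal.add_le_add_iff_right hhalfne).mp h5
  -- constants
  refine ⟨c₁ * (mr/2)^(d-1) / Real.sqrt d ^ β, d * c₂ * (2*mr)^(d-1), δ', ?_, ?_, hδ'pos, ?_⟩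
  · have hX : 0 < Real.sqrt d ^ β := Real.rpow_pos_of_pos (Real.sqrt_pos.mpr hdpos) β
    positivity
  · positivity
  intro h hh0 hhδ
  set P : Set (Ed d) := {x : Ed d | ∀ i, x i ∈ Ω} with hP
  have hev : ∀ i : Fin d, Measurable fun x : Ed d => x i :=
    fun i => (measurable_pi_apply i).comp (WithLp.measurable_ofLp 2 (Fin d → ℝ))
  have hPm : MeasurableSet P := by
    have : P = ⋂ i, (fun x : Ed d => x i) ⁻¹' Ω := by ext x; simp [hP]
    rw [this]
    exact MeasurableSet.iInter fun i => (hev i) hΩm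
  have haddm : Measurable fun x : Ed d => x + h :=
    (continuous_id.add continuous_const).measurable
  have hsq : (omega2 (Set.indicator P fun _ => (1:ℂ)) h) ^ 2
      = volume (((fun x : Ed d => x + h) ⁻¹' P) ∆ P) :=
    sq_eLpNorm_ind volume P hPm (fun x => x + h) haddm
  set T : Set (Ed d) := ((fun x : Ed d => x + h) ⁻¹' P) ∆ P with hT
  have hnormle : ∀ i, |h i| ≤ ‖h‖ := Ed_abs_coord_le_norm h
  have hallle : ∀ i, |h i| ≤ δ' := fun i => (hnormle i).trans hhδ
  obtain ⟨i₀, hi₀⟩ := Ed_exists_norm_le hd h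
  have hi₀pos : 0 < |h i₀| := by
    by_contra hcon
    push_neg at hcon
    have : |h i₀| = 0 := le_antisymm hcon (abs_nonneg _)
    rw [this, mul_zero] at hi₀
    exact absurd (hh0.trans_le hi₀) (lt_irrefl 0)
  constructor
  · -- lower bound
    set Fl : Fin d → Set ℝ :=
      fun j => if j = i₀ then D (h i₀) else Ω ∩ ((fun s => s + h j) ⁻¹' Ω) with hFl
    have hFlm : ∀ j, MeasurableSet (Fl j) := by
      intro j
      rw [hFl]
      dsimp only
      split_ifs
      · exact hDm _
      · exact hΩm.inter ((measurable_add_const _) hΩm)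
    have hGsub : {x : Ed d | ∀ j, x j ∈ Fl j} ⊆ T := by
      intro x hx
      have hxi : x i₀ ∈ D (h i₀) := by
        have := hx i₀
        simpa only [hFl, ↓reduceIte] using this
      have hxj : ∀ j, j ≠ i₀ → x j ∈ Ω ∩ ((fun s => s + h j) ⁻¹' Ω) := by
        intro j hj
        have := hx j
        simp only [hFl] at this
        rwa [if_neg hj] at this
      rcases Set.mem_symmDiff.mp hxi with ⟨hin, hout⟩ | ⟨hin, hout⟩
      · refine Set.mem_symmDiff.mpr (Or.inl ⟨?_, ?_⟩)
        · intro j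
          rcases eq_or_ne j i₀ with rfl | hj
          · exact hin
          · exact (hxj j hj).2
        · intro hPx
          exact hout (hPx i₀)
      · refine Set.mem_symmDiff.mpr (Or.inr ⟨?_, ?_⟩)
        · intro j
          rcases eq_or_ne j i₀ with rfl | hj
          · exact hin
          · exact (hxj j hj).1
        · intro hPx
          exact hout (hPx i₀)
    have hvolG : volume {x : Ed d | ∀ j, x j ∈ Fl j} = ∏ j, volume (Fl j) :=
      vol_pi_set d Fl hFlm
    have hprodeq : ∏ j, volume (Fl j)
        = volume (D (h i₀)) * ∏ j ∈ Finset.univ.erase i₀, volume (Fl j) := by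
      rw [← Finset.mul_prod_erase Finset.univ _ (Finset.mem_univ i₀)]
      congr 2
      rw [hFl]
      simp
    have hlow2 : (m/2) ^ (d-1) ≤ ∏ j ∈ Finset.univ.erase i₀, volume (Fl j) := by
      have hcard : (Finset.univ.erase i₀).card = d - 1 := by
        rw [Finset.card_erase_of_mem (Finset.mem_univ i₀), Finset.card_univ, Fintype.card_fin]
      calc (m/2) ^ (d-1) = ∏ _j ∈ Finset.univ.erase i₀, (m/2) := by
            rw [Finset.prod_const, hcard]
        _ ≤ _ := Finset.prod_le_prod' (fun j hj => by
            simp only [hFl]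
            rw [if_neg (Finset.ne_of_mem_erase hj)]
            exact hFB (h j) (hallle j))
    have hlow3 : ENNReal.ofReal (c₁ * |h i₀| ^ β) ≤ volume (D (h i₀)) := by
      have := (hΩreg (h i₀) hi₀pos ((hallle i₀).trans hδ'δ)).1
      rwa [hω] at this
    have hX : 0 < Real.sqrt d ^ β := Real.rpow_pos_of_pos (Real.sqrt_pos.mpr hdpos) β
    have hreal : c₁ * (mr/2)^(d-1) / Real.sqrt d ^ β * ‖h‖ ^ β
        ≤ c₁ * |h i₀| ^ β * (mr/2)^(d-1) := by
      have hs : ‖h‖ ^ β ≤ Real.sqrt d ^ β * |h i₀| ^ β := by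
        rw [← Real.mul_rpow (Real.sqrt_nonneg _) (abs_nonneg _)]
        exact Real.rpow_le_rpow (norm_nonneg h) hi₀ hβ0.le
      calc c₁ * (mr/2)^(d-1) / Real.sqrt d ^ β * ‖h‖ ^ β
          ≤ c₁ * (mr/2)^(d-1) / Real.sqrt d ^ β * (Real.sqrt d ^ β * |h i₀| ^ β) :=
            mul_le_mul_of_nonneg_left hs (by positivity)
        _ = c₁ * |h i₀| ^ β * (mr/2)^(d-1) := by
            field_simp
    rw [hsq]
    calc ENNReal.ofReal (c₁ * (mr/2)^(d-1) / Real.sqrt d ^ β * ‖h‖ ^ β)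
        ≤ ENNReal.ofReal (c₁ * |h i₀| ^ β * (mr/2)^(d-1)) := ENNReal.ofReal_le_ofReal hreal
      _ = ENNReal.ofReal (c₁ * |h i₀| ^ β) * (m/2) ^ (d-1) := by
          rw [ENNReal.ofReal_mul (by positivity), ← hhalf, ← ENNReal.ofReal_pow (by positivity)]
      _ ≤ volume (D (h i₀)) * ∏ j ∈ Finset.univ.erase i₀, volume (Fl j) :=
          mul_le_mul' hlow3 hlow2
      _ = volume {x : Ed d | ∀ j, x j ∈ Fl j} := by rw [hvolG, hprodeq]
      _ ≤ volume T := measure_mono hGsub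
  · -- upper bound
    set Fu : Fin d → Fin d → Set ℝ :=
      fun i j => if j = i then D (h i) else Ω ∪ ((fun s => s + h j) ⁻¹' Ω) with hFu
    have hFum : ∀ i j, MeasurableSet (Fu i j) := by
      intro i j
      rw [hFu]
      dsimp only
      split_ifs
      · exact hDm _
      · exact hΩm.union ((measurable_add_const _) hΩm)
    have hTsub : T ⊆ ⋃ i, {x : Ed d | ∀ j, x j ∈ Fu i j} := by
      intro x hx
      rcases Set.mem_symmDiff.mp hx with ⟨hin, hout⟩ | ⟨hin, hout⟩
      · have hout' : ∃ i, x i ∉ Ω := by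
          by_contra hcon
          push_neg at hcon
          exact hout hcon
        obtain ⟨i, hi⟩ := hout'
        refine Set.mem_iUnion.mpr ⟨i, fun j => ?_⟩
        rcases eq_or_ne j i with rfl | hj
        · simp only [hFu]
          exact Set.mem_symmDiff.mpr (Or.inl ⟨hin j, hi⟩)
        · simp only [hFu]
          rw [if_neg hj]
          exact Or.inr (hin j)
      · have hout' : ∃ i, x i + h i ∉ Ω := by
          by_contra hcon
          push_neg at hcon
          exact hout hcon
        obtain ⟨i, hi⟩ := hout'
        refine Set.mem_iUnion.mpr ⟨i, fun j => ?_⟩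
        rcases eq_or_ne j i with rfl | hj
        · simp only [hFu]
          exact Set.mem_symmDiff.mpr (Or.inr ⟨hin j, hi⟩)
        · simp only [hFu]
          rw [if_neg hj]
          exact Or.inl (hin j)
    have h2m : ENNReal.ofReal (2 * mr) = 2 * m := by
      rw [ENNReal.ofReal_mul (by norm_num), ENNReal.ofReal_toReal hmne, ENNReal.ofReal_ofNat]
    have hterm : ∀ i, volume {x : Ed d | ∀ j, x j ∈ Fu i j}
        ≤ ENNReal.ofReal (c₂ * ‖h‖ ^ β) * (2*m) ^ (d-1) := by
      intro i
      rw [vol_pi_set d (Fu i) (hFum i)]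
      have hcard : (Finset.univ.erase i).card = d - 1 := by
        rw [Finset.card_erase_of_mem (Finset.mem_univ i), Finset.card_univ, Fintype.card_fin]
      have hsplit : ∏ j, volume (Fu i j)
          = volume (D (h i)) * ∏ j ∈ Finset.univ.erase i, volume (Fu i j) := by
        rw [← Finset.mul_prod_erase Finset.univ _ (Finset.mem_univ i)]
        congr 2
        rw [hFu]
        simp
      rw [hsplit]
      have hub1 : volume (D (h i)) ≤ ENNReal.ofReal (c₂ * ‖h‖ ^ β) := by
        refine (hFA (h i) (hallle i)).trans (ENNReal.ofReal_le_ofReal ?_)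
        exact mul_le_mul_of_nonneg_left
          (Real.rpow_le_rpow (abs_nonneg _) (hnormle i) hβ0.le) hc₂.le
      have hub2 : ∏ j ∈ Finset.univ.erase i, volume (Fu i j) ≤ (2*m) ^ (d-1) := by
        calc ∏ j ∈ Finset.univ.erase i, volume (Fu i j)
            ≤ ∏ _j ∈ Finset.univ.erase i, (2*m) := Finset.prod_le_prod' (fun j hj => by
              simp only [hFu]
              rw [if_neg (Finset.ne_of_mem_erase hj)]
              calc volume (Ω ∪ ((fun s => s + h j) ⁻¹' Ω))
                  ≤ volume Ω + volume ((fun s => s + h j) ⁻¹' Ω) := measure_union_le _ _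
                _ = m + m := by rw [measure_preimage_add_right]
                _ = 2 * m := (two_mul m).symm)
          _ = (2*m) ^ (d-1) := by rw [Finset.prod_const, hcard]
      exact mul_le_mul' hub1 hub2
    rw [hsq]
    calc volume T ≤ ∑' i : Fin d, volume {x : Ed d | ∀ j, x j ∈ Fu i j} :=
          (measure_mono hTsub).trans (measure_iUnion_le _)
      _ = ∑ i : Fin d, volume {x : Ed d | ∀ j, x j ∈ Fu i j} := tsum_fintype _
      _ ≤ ∑ _i : Fin d, ENNReal.ofReal (c₂ * ‖h‖ ^ β) * (2*m) ^ (d-1) :=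
          Finset.sum_le_sum (fun i _ => hterm i)
      _ = (d : ℝ≥0∞) * (ENNReal.ofReal (c₂ * ‖h‖ ^ β) * (2*m) ^ (d-1)) := by
          rw [Finset.sum_const, Finset.card_univ, Fintype.card_fin, nsmul_eq_mul]
      _ = ENNReal.ofReal (↑d * c₂ * (2*mr)^(d-1) * ‖h‖ ^ β) := by
          have key : ENNReal.ofReal (↑d * c₂ * (2*mr)^(d-1) * ‖h‖ ^ β)
              = (d : ℝ≥0∞) * (ENNReal.ofReal (c₂ * ‖h‖ ^ β) * (2*m) ^ (d-1)) := by
            rw [show (↑d * c₂ * (2*mr)^(d-1) * ‖h‖ ^ β : ℝ)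
                = ↑d * ((c₂ * ‖h‖ ^ β) * (2*mr)^(d-1)) by ring,
              ENNReal.ofReal_mul (by positivity), ENNReal.ofReal_mul (by positivity),
              ENNReal.ofReal_natCast, ENNReal.ofReal_pow (by positivity), h2m]
          exact key.symm
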